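/- Let V be a finite set, let (X_i : i ∈ V) be random variables with joint distribution P, and suppose P is restricted-faithful to a DMAG G* on V. If G is a DMAG that is Markov equivalent to G* (I(G) = I(G*)) and π = po(G), then G_π = G. -/

import Mathlib

open MeasureTheory ProbabilityTheory

/-- A mixed graph with directed and bidirected edges, no self-loops, and at most one
edge between any pair of vertices. -/
structure MixedGraph (V : Type*) where
  dir : V → V → Prop
  bidir : V → V → Prop
  bidir_symm : ∀ i j, bidir i j → bidir j i
  dir_irrefl : ∀ i, ¬ dir i i
  bidir_irrefl : ∀ i, ¬ bidir i i
  not_dir_dir : ∀ i j, dir i j → ¬ dir j i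
  not_dir_bidir : ∀ i j, dir i j → ¬ bidir i j

namespace MixedGraph

variable {V : Type*}

/-- `i` and `j` are adjacent (joined by some edge). -/
def adj (G : MixedGraph V) (i j : V) : Prop := G.dir i j ∨ G.dir j i ∨ G.bidir i j

lemma adj_symm (G : MixedGraph V) {i j : V} (h : G.adj i j) : G.adj j i := by
  rcases h with h | h | h
  · exact Or.inr (Or.inl h)
  · exact Or.inl h
  · exact Or.inr (Or.inr (G.bidir_symm i j h))

/-- There is an edge between `a` and `k` with an arrowhead at `k`. -/
def arrowAt (G : MixedGraph V) (a k : V) : Prop := G.dir a k ∨ G.bidir a k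

/-- `k` is a collider on the path segment `x - k - y`: both incident edges have an
arrowhead at `k`. -/
def IsCollider (G : MixedGraph V) (x k y : V) : Prop := G.arrowAt x k ∧ G.arrowAt y k

/-- `i` is an ancestor of `j`: there is a (possibly trivial) directed path from `i` to `j`. -/
def Anc (G : MixedGraph V) (i j : V) : Prop := Relation.ReflTransGen G.dir i j

/-- There is a nonempty directed path from `i` to `j`. -/
def StrAnc (G : MixedGraph V) (i j : V) : Prop := Relation.TransGen G.dir i j

/-- `G` has no directed cycles. -/
def Acyclic (G : MixedGraph V) : Prop := ∀ i, ¬ G.StrAnc i i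

/-- `G` is a directed ancestral graph: no directed cycles, and no directed path between
the endpoints of a bidirected edge. -/
def IsAncestral (G : MixedGraph V) : Prop :=
  G.Acyclic ∧ ∀ i j, G.bidir i j → ¬ G.StrAnc i j

end MixedGraph

/-- A path in a mixed graph from `a` to `b`: a nonempty list of distinct vertices,
consecutive ones adjacent. Since there is at most one edge between any pair of
vertices, the list of vertices determines the edges of the path. -/
structure MPath {V : Type*} (G : MixedGraph V) (a b : V) where
  verts : List V
  ne_nil : verts ≠ []
  head_eq : verts.head ne_nil = a
  last_eq : verts.getLast ne_nil = b
  nodup : verts.Nodup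
  chain : verts.Chain' G.adj

namespace MixedGraph

variable {V : Type*}

/-- The path `p` is m-connecting given `C`: every non-collider strictly inside `p` lies
outside `C` and every collider strictly inside `p` is an ancestor of some element of `C`. -/
def MConnecting (G : MixedGraph V) {a b : V} (C : Set V) (p : MPath G a b) : Prop :=
  ∀ (m : ℕ) (h : m + 2 < p.verts.length),
    (G.IsCollider (p.verts[m]'(by omega)) (p.verts[m+1]'(by omega)) (p.verts[m+2]'h) →
        ∃ c ∈ C, G.Anc (p.verts[m+1]'(by omega)) c) ∧
    (¬ G.IsCollider (p.verts[m]'(by omega)) (p.verts[m+1]'(by omega)) (p.verts[m+2]'h) →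
        p.verts[m+1]'(by omega) ∉ C)

/-- m-separation: `A ⊥_G B | C`, i.e. there is no m-connecting path given `C` from a
member of `A` to a member of `B`. -/
def MSep (G : MixedGraph V) (A B C : Set V) : Prop :=
  ∀ a ∈ A, ∀ b ∈ B, ∀ p : MPath G a b, ¬ G.MConnecting C p

/-- `i` and `j` are m-connected given `C`: there is an m-connecting path between them. -/
def MConn (G : MixedGraph V) (i j : V) (C : Set V) : Prop :=
  (∃ p : MPath G i j, G.MConnecting C p) ∨ (∃ p : MPath G j i, G.MConnecting C p)

/-- A directed ancestral graph is maximal if every non-adjacent pair of vertices can be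
m-separated by some set not containing either of them. -/
def IsMaximal (G : MixedGraph V) : Prop :=
  ∀ i j : V, i ≠ j → ¬ G.adj i j → ∃ S : Set V, i ∉ S ∧ j ∉ S ∧ G.MSep {i} {j} S

/-- A directed maximal ancestral graph. -/
def IsDMAG (G : MixedGraph V) : Prop := G.IsAncestral ∧ G.IsMaximal

/-- `G` and `H` are Markov equivalent: they have the same m-separation statements,
`I(G) = I(H)`. -/
def MarkovEquiv (G H : MixedGraph V) : Prop :=
  ∀ A B C : Set V, Disjoint A B → Disjoint A C → Disjoint B C →
    (G.MSep A B C ↔ H.MSep A B C)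

/-- The number of edges `|G| = |D| + |B|`; since there is at most one edge between any
pair of vertices this is the number of adjacent unordered pairs. -/
noncomputable def numEdges (G : MixedGraph V) : ℕ :=
  Nat.card {s : Sym2 V // ∃ i j : V, s = s(i, j) ∧ G.adj i j}

/-- `G` and `H` have the same skeleton. -/
def SameSkel (G H : MixedGraph V) : Prop := ∀ i j : V, G.adj i j ↔ H.adj i j

/-- The path `p` from `i` to `j` is discriminating for `k`: `i,j` are non-adjacent, `k` is
the second-to-last vertex, there is at least one vertex strictly between `i` and `k`, and
every vertex strictly between `i` and `k` is a collider on the path and a parent of `j`. -/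
def IsDiscriminatingFor (G : MixedGraph V) {i j : V} (p : MPath G i j) (k : V) : Prop :=
  ¬ G.adj i j ∧
  ∃ h4 : 4 ≤ p.verts.length,
    p.verts[p.verts.length - 2]'(by omega) = k ∧
    ∀ (m : ℕ) (_hm1 : 1 ≤ m) (_hm2 : m + 3 ≤ p.verts.length),
      G.IsCollider (p.verts[m-1]'(by omega)) (p.verts[m]'(by omega)) (p.verts[m+1]'(by omega)) ∧
      G.dir (p.verts[m]'(by omega)) j

/-- The second-to-last vertex of the path `p` is a collider on `p`. -/
def ColliderAtSecondLast (G : MixedGraph V) {a b : V} (p : MPath G a b) : Prop :=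
  ∃ _h3 : 3 ≤ p.verts.length,
    G.IsCollider (p.verts[p.verts.length - 3]'(by omega))
      (p.verts[p.verts.length - 2]'(by omega)) (p.verts[p.verts.length - 1]'(by omega))

/-- `i` and `j` cannot be m-separated in `G` by any set avoiding them. -/
def Insep (G : MixedGraph V) (i j : V) : Prop :=
  ∀ S : Set V, i ∉ S → j ∉ S → ¬ G.MSep {i} {j} S ∧ ¬ G.MSep {j} {i} S

end MixedGraph

open MixedGraph

/-- The maximal closure `G̅` of an ancestral graph `G`: add an edge between every
non-adjacent inseparable pair, with the mark determined by the ancestor relations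
(so that the result stays ancestral and has the same m-separations). -/
def maximalClosure {V : Type*} (G : MixedGraph V) : MixedGraph V where
  dir i j := G.dir i j ∨ (¬ G.adj i j ∧ i ≠ j ∧ G.Insep i j ∧ G.StrAnc i j ∧ ¬ G.StrAnc j i)
  bidir i j := G.bidir i j ∨ (¬ G.adj i j ∧ i ≠ j ∧ G.Insep i j ∧ ¬ G.StrAnc i j ∧ ¬ G.StrAnc j i)
  bidir_symm i j h := by
    rcases h with h | ⟨hadj, hne, hins, h1, h2⟩
    · exact Or.inl (G.bidir_symm i j h)
    · exact Or.inr ⟨fun hc => hadj (G.adj_symm hc), hne.symm,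
        fun S hS1 hS2 => (hins S hS2 hS1).symm, h2, h1⟩
  dir_irrefl i h := by
    rcases h with h | ⟨_, hne, _⟩
    · exact G.dir_irrefl i h
    · exact hne rfl
  bidir_irrefl i h := by
    rcases h with h | ⟨_, hne, _⟩
    · exact G.bidir_irrefl i h
    · exact hne rfl
  not_dir_dir i j h h' := by
    rcases h with h | ⟨hadj, hne, hins, h1, h2⟩ <;>
      rcases h' with h' | ⟨hadj', hne', hins', h1', h2'⟩
    · exact G.not_dir_dir i j h h'
    · exact hadj' (Or.inr (Or.inl h))
    · exact hadj (Or.inr (Or.inl h'))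
    · exact h2 h1'
  not_dir_bidir i j h h' := by
    rcases h with h | ⟨hadj, hne, hins, h1, h2⟩ <;>
      rcases h' with h' | ⟨hadj', hne', hins', h1', h2'⟩
    · exact G.not_dir_bidir i j h h'
    · exact hadj' (Or.inl h)
    · exact hadj (Or.inr (Or.inr h'))
    · exact h1' h1

/-- A partially ordered set structure (poset) on the ground set `V`: a reflexive,
transitive, antisymmetric relation. -/
structure FinPoset (V : Type*) where
  le : V → V → Prop
  le_refl : ∀ a, le a a
  le_trans : ∀ a b c, le a b → le b c → le a c
  le_antisymm : ∀ a b, le a b → le b a → a = b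

namespace FinPoset

/-- `pre_π(i,j) = {x : x ≤ i or x ≤ j}`. -/
def pre {V : Type*} (π : FinPoset V) (i j : V) : Set V := {x | π.le x i ∨ π.le x j}

lemma pre_comm {V : Type*} (π : FinPoset V) (i j : V) : π.pre j i = π.pre i j := by
  ext x; exact or_comm

end FinPoset

/-- The poset `po(G)` associated to an acyclic mixed graph: `i ≤ j` iff `i` is an
ancestor of `j` in `G`. -/
def po {V : Type*} (G : MixedGraph V) (hG : G.Acyclic) : FinPoset V where
  le := G.Anc
  le_refl _ := Relation.ReflTransGen.refl
  le_trans _ _ _ h1 h2 := Relation.ReflTransGen.trans h1 h2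
  le_antisymm a b hab hba := by
    by_contra hne
    rcases hab.cases_head with h | ⟨c, hac, hcb⟩
    · exact hne h
    · exact hG a (Relation.TransGen.head' hac (hcb.trans hba))

/-- The empty poset: all distinct elements are incomparable. -/
def emptyPoset (V : Type*) : FinPoset V :=
  ⟨Eq, fun _ => rfl, fun _ _ _ h1 h2 => h1.trans h2, fun _ _ h _ => h⟩
section Probability

variable {V : Type*} {Ω : Type*} [MeasurableSpace Ω] [StandardBorelSpace Ω]

/-- Conditional independence `X_A ⊥⊥ X_B | X_C` under the distribution of the random
vector `X`: the joint random vectors `(X_i : i ∈ A)` and `(X_i : i ∈ B)` are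
conditionally independent given the σ-algebra generated by `(X_i : i ∈ C)`. -/
def CI (μ : MeasureTheory.Measure Ω) [MeasureTheory.IsFiniteMeasure μ]
    (X : V → Ω → ℝ) (hX : ∀ i, Measurable (X i)) (A B C : Set V) : Prop :=
  ProbabilityTheory.CondIndepFun
    (MeasurableSpace.comap (fun ω => fun i : C => X i ω) MeasurableSpace.pi)
    (Measurable.comap_le (measurable_pi_iff.mpr fun i : C => hX i))
    (fun ω => fun i : A => X i ω) (fun ω => fun i : B => X i ω) μ

/-- `X_i` and `X_j` are conditionally dependent given `X_S` (stated symmetrically). -/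
def CondDep (μ : MeasureTheory.Measure Ω) [MeasureTheory.IsFiniteMeasure μ]
    (X : V → Ω → ℝ) (hX : ∀ i, Measurable (X i)) (i j : V) (S : Set V) : Prop :=
  ¬ CI μ X hX {i} {j} S ∨ ¬ CI μ X hX {j} {i} S

variable (μ : MeasureTheory.Measure Ω) [MeasureTheory.IsFiniteMeasure μ]
    (X : V → Ω → ℝ) (hX : ∀ i, Measurable (X i))

/-- `G` is an independence map (IMAP) of the distribution of `X`: every m-separation in
`G` implies the corresponding conditional independence. -/
def IsIMAP (G : MixedGraph V) : Prop :=
  ∀ A B C : Set V, Disjoint A B → Disjoint A C → Disjoint B C →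
    G.MSep A B C → CI μ X hX A B C

/-- Delete the directed edge `i → j` from `G`. -/
def deleteDir {V : Type*} (G : MixedGraph V) (i j : V) : MixedGraph V where
  dir a b := G.dir a b ∧ ¬(a = i ∧ b = j)
  bidir := G.bidir
  bidir_symm := G.bidir_symm
  dir_irrefl a h := G.dir_irrefl a h.1
  bidir_irrefl := G.bidir_irrefl
  not_dir_dir a b h h' := G.not_dir_dir a b h.1 h'.1
  not_dir_bidir a b h := G.not_dir_bidir a b h.1

/-- Delete the bidirected edge `i ↔ j` from `G`. -/
def deleteBidir {V : Type*} (G : MixedGraph V) (i j : V) : MixedGraph V where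
  dir := G.dir
  bidir a b := G.bidir a b ∧ ¬((a = i ∧ b = j) ∨ (a = j ∧ b = i))
  bidir_symm a b h := ⟨G.bidir_symm a b h.1, by tauto⟩
  dir_irrefl := G.dir_irrefl
  bidir_irrefl a h := G.bidir_irrefl a h.1
  not_dir_dir := G.not_dir_dir
  not_dir_bidir a b h h' := G.not_dir_bidir a b h h'.1

/-- `G` is a minimal IMAP of the distribution of `X`: `G` is a DMAG and an IMAP, and no
single edge of `G` can be deleted while keeping the graph both maximal and an IMAP. -/
def IsMinimalIMAP (G : MixedGraph V) : Prop :=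
  G.IsDMAG ∧ IsIMAP μ X hX G ∧
  (∀ i j, G.dir i j →
    ¬((deleteDir G i j).IsMaximal ∧ IsIMAP μ X hX (deleteDir G i j))) ∧
  (∀ i j, G.bidir i j →
    ¬((deleteBidir G i j).IsMaximal ∧ IsIMAP μ X hX (deleteBidir G i j)))

/-- Adjacency-faithfulness: endpoints of any edge of `G` are conditionally dependent
given any set avoiding them. -/
def AdjFaithful (G : MixedGraph V) : Prop :=
  ∀ i j, G.adj i j → ∀ S : Set V, i ∉ S → j ∉ S → CondDep μ X hX i j S

/-- Orientation-faithfulness: for any unshielded triple `i - k - j` of the skeleton of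
`G`, if `i` and `j` are m-connected given `S` then `X_i` and `X_j` are conditionally
dependent given `X_S`. -/
def OrientFaithful (G : MixedGraph V) : Prop :=
  ∀ i k j : V, i ≠ j → G.adj i k → G.adj k j → ¬ G.adj i j →
    ∀ S : Set V, i ∉ S → j ∉ S → G.MConn i j S → CondDep μ X hX i j S

/-- Discriminating-faithfulness: for the endpoints `i, j` of any discriminating path of
`G`, if `i` and `j` are m-connected given `S` then `X_i` and `X_j` are conditionally
dependent given `X_S`. -/
def DiscrFaithful (G : MixedGraph V) : Prop :=
  ∀ (i j k : V) (p : MPath G i j), G.IsDiscriminatingFor p k →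
    ∀ S : Set V, i ∉ S → j ∉ S → G.MConn i j S → CondDep μ X hX i j S

/-- The distribution of `X` is restricted-faithful to `G`. -/
def RestrictedFaithful (G : MixedGraph V) : Prop :=
  IsIMAP μ X hX G ∧ AdjFaithful μ X hX G ∧ OrientFaithful μ X hX G ∧ DiscrFaithful μ X hX G

/-- The distribution of `X` is faithful to `G`: m-separation holds iff the corresponding
conditional independence holds. -/
def Faithful (G : MixedGraph V) : Prop :=
  ∀ A B C : Set V, Disjoint A B → Disjoint A C → Disjoint B C →
    (G.MSep A B C ↔ CI μ X hX A B C)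

/-- The graph `AG(π, P)` associated to a poset `π` and the distribution `P` of `X`. -/
def AGdist (π : FinPoset V) : MixedGraph V where
  dir i j := π.le i j ∧ i ≠ j ∧ CondDep μ X hX i j (π.pre i j \ {i, j})
  bidir i j := ¬ π.le i j ∧ ¬ π.le j i ∧ CondDep μ X hX i j (π.pre i j \ {i, j})
  bidir_symm i j h := by
    refine ⟨h.2.1, h.1, ?_⟩
    rw [π.pre_comm, Set.pair_comm j i]
    exact h.2.2.symm
  dir_irrefl i h := h.2.1 rfl
  bidir_irrefl i h := h.1 (π.le_refl i)
  not_dir_dir i j h h' := h.2.1 (π.le_antisymm i j h.1 h'.1)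
  not_dir_bidir i j h h' := h'.1 h.1

lemma AGdist_acyclic (π : FinPoset V) : (AGdist μ X hX π).Acyclic := by
  have key : ∀ a b, (AGdist μ X hX π).StrAnc a b → π.le a b ∧ a ≠ b := by
    intro a b h
    induction h with
    | single h => exact ⟨h.1, h.2.1⟩
    | tail _ h2 ih =>
        refine ⟨π.le_trans _ _ _ ih.1 h2.1, fun hac => ?_⟩
        subst hac
        exact h2.2.1 (π.le_antisymm _ _ h2.1 ih.1)
  exact fun i hi => (key i i hi).2 rfl

/-- `G_π`: the maximal closure of `AG(po(AG(π, P)), P)`, a minimal IMAP of the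
distribution `P` of `X` associated to the poset `π`. -/
def Gpi (π : FinPoset V) : MixedGraph V :=
  maximalClosure (AGdist μ X hX (po (AGdist μ X hX π) (AGdist_acyclic μ X hX π)))

end Probability

section GraphVersion

variable {V : Type*}

/-- The graph `AG(π, G)` associated to a poset `π`, with conditional (in)dependence read
off from m-separation in a graph `G` (used when the distribution is faithful to `G`). -/
def AGgraph (π : FinPoset V) (G : MixedGraph V) : MixedGraph V where
  dir i j := π.le i j ∧ i ≠ j ∧ G.MConn i j (π.pre i j \ {i, j})
  bidir i j := ¬ π.le i j ∧ ¬ π.le j i ∧ G.MConn i j (π.pre i j \ {i, j})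
  bidir_symm i j h := by
    refine ⟨h.2.1, h.1, ?_⟩
    rw [π.pre_comm, Set.pair_comm j i]
    exact h.2.2.symm
  dir_irrefl i h := h.2.1 rfl
  bidir_irrefl i h := h.1 (π.le_refl i)
  not_dir_dir i j h h' := h.2.1 (π.le_antisymm i j h.1 h'.1)
  not_dir_bidir i j h h' := h'.1 h.1

/-- `H` is an independence map of the graph `G`: every m-separation of `H` is an
m-separation of `G`. -/
def GraphIMAP (H G : MixedGraph V) : Prop :=
  ∀ A B C : Set V, Disjoint A B → Disjoint A C → Disjoint B C →
    H.MSep A B C → G.MSep A B C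

/-- A complete DMAG: a DMAG whose skeleton is the complete graph. -/
def IsCompleteDMAG (G : MixedGraph V) : Prop :=
  G.IsDMAG ∧ ∀ i j : V, i ≠ j → G.adj i j

end GraphVersion


section Proposition2
open MixedGraph Relation List

namespace Prop2

variable {V : Type*}

/-! ### Basic edge lemmas -/

lemma adj_irrefl (G : MixedGraph V) (i : V) : ¬ G.adj i i := by
  rintro (h | h | h)
  · exact G.dir_irrefl i h
  · exact G.dir_irrefl i h
  · exact G.bidir_irrefl i h

lemma ne_of_adj (G : MixedGraph V) {i j : V} (h : G.adj i j) : i ≠ j := by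
  rintro rfl; exact adj_irrefl G i h

lemma dir_of_adj_not_arrowAt {G : MixedGraph V} {b c : V} (hadj : G.adj b c)
    (h : ¬ G.arrowAt c b) : G.dir b c := by
  rcases hadj with h1 | h1 | h1
  · exact h1
  · exact absurd (Or.inl h1) h
  · exact absurd (Or.inr (G.bidir_symm _ _ h1)) h

lemma not_arrowAt_of_dir {G : MixedGraph V} {b c : V} (h : G.dir b c) : ¬ G.arrowAt c b := by
  rintro (h1 | h1)
  · exact G.not_dir_dir b c h h1
  · exact G.not_dir_bidir b c h (G.bidir_symm c b h1)

lemma collider_symm {G : MixedGraph V} {a b c : V} (h : G.IsCollider a b c) :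
    G.IsCollider c b a := ⟨h.2, h.1⟩

lemma anc_of_dir {G : MixedGraph V} {a b : V} (h : G.dir a b) : G.Anc a b :=
  Relation.ReflTransGen.single h

/-! ### Walks -/

/-- A walk from `i` to `j` (like `MPath` but without `Nodup`). -/
def IsWalk (G : MixedGraph V) (i j : V) (w : List V) : Prop :=
  ∃ h : w ≠ [], w.head h = i ∧ w.getLast h = j ∧ w.Chain' G.adj

/-- All consecutive triples of `w` satisfy `P`. -/
def TriOk (P : V → V → V → Prop) (w : List V) : Prop :=
  ∀ m : ℕ, (h : m + 2 < w.length) →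
    P (w[m]'(by omega)) (w[m+1]'(by omega)) (w[m+2]'h)

/-- The triple condition of an m-connecting walk given `S`. -/
def OkP (G : MixedGraph V) (S : Set V) : V → V → V → Prop := fun a b c =>
  (G.IsCollider a b c → ∃ x ∈ S, G.Anc b x) ∧ (¬ G.IsCollider a b c → b ∉ S)

/-- The weak triple condition: colliders are ancestors of `S` or of an endpoint. -/
def WOkP (G : MixedGraph V) (S : Set V) (i j : V) : V → V → V → Prop := fun a b c =>
  (G.IsCollider a b c → (∃ x ∈ S, G.Anc b x) ∨ G.Anc b i ∨ G.Anc b j) ∧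
  (¬ G.IsCollider a b c → b ∉ S)

/-- A bad triple: a collider that is not an ancestor of `S`. -/
def BadP (G : MixedGraph V) (S : Set V) : V → V → V → Prop := fun a b c =>
  G.IsCollider a b c ∧ ¬ ∃ x ∈ S, G.Anc b x

lemma getD_lt {w : List V} {m : ℕ} (x : V) (h : m < w.length) : w.getD m x = w[m]'h := by
  simp [List.getD_eq_getElem?_getD, List.getElem?_eq_getElem h]

/-- The set of indices of bad triples. -/
def badSet (G : MixedGraph V) (S : Set V) (x : V) (w : List V) : Set ℕ :=
  {m | ∃ h : m + 2 < w.length,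
    BadP G S (w[m]'(by omega)) (w[m+1]'(by omega)) (w[m+2]'h)}

lemma badSet_finite (G : MixedGraph V) (S : Set V) (x : V) (w : List V) :
    (badSet G S x w).Finite := by
  apply Set.Finite.subset (Set.finite_Iio w.length)
  rintro m ⟨h, -⟩
  exact Set.mem_Iio.mpr (by omega)

lemma chain'_getElem {R : V → V → Prop} {w : List V} (h : w.Chain' R) {m : ℕ}
    (hm : m + 1 < w.length) : R (w[m]'(by omega)) (w[m+1]'hm) := by
  have := List.isChain_iff_getElem.mp h m (by omega)
  simpa [List.get_eq_getElem] using this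

lemma chain'_of_getElem {R : V → V → Prop} {w : List V}
    (h : ∀ m : ℕ, (hm : m + 1 < w.length) → R (w[m]'(by omega)) (w[m+1]'hm)) :
    w.Chain' R := by
  apply List.isChain_iff_getElem.mpr
  intro m hm
  simpa [List.get_eq_getElem] using h m (by omega)


/-! ### Reversal -/

lemma TriOk_reverse {P : V → V → V → Prop} (hsym : ∀ a b c, P a b c → P c b a)
    {w : List V} (h : TriOk P w) : TriOk P w.reverse := by
  intro m hm
  have hlen : w.reverse.length = w.length := List.length_reverse
  set n := w.length with hn
  have hmn : m + 2 < n := by omega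
  set k := n - 3 - m with hk
  have e0 : w.reverse[m]'(by omega) = w[k+2]'(by omega) := by
    rw [List.getElem_reverse]; exact getElem_congr_idx (by omega)
  have e1 : w.reverse[m+1]'(by omega) = w[k+1]'(by omega) := by
    rw [List.getElem_reverse]; exact getElem_congr_idx (by omega)
  have e2 : w.reverse[m+2]'(by omega) = w[k]'(by omega) := by
    rw [List.getElem_reverse]; exact getElem_congr_idx (by omega)
  rw [e0, e1, e2]
  exact hsym _ _ _ (h k (by omega))

lemma OkP_symm (G : MixedGraph V) (S : Set V) :
    ∀ a b c, OkP G S a b c → OkP G S c b a := by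
  intro a b c h
  exact ⟨fun hc => h.1 (collider_symm hc), fun hc => h.2 (fun hc' => hc (collider_symm hc'))⟩

lemma WOkP_symm (G : MixedGraph V) (S : Set V) (i j : V) :
    ∀ a b c, WOkP G S i j a b c → WOkP G S i j c b a := by
  intro a b c h
  exact ⟨fun hc => h.1 (collider_symm hc), fun hc => h.2 (fun hc' => hc (collider_symm hc'))⟩

lemma IsWalk_reverse {G : MixedGraph V} {i j : V} {w : List V} (h : IsWalk G i j w) :
    IsWalk G j i w.reverse := by
  obtain ⟨hne, hh, hl, hc⟩ := h
  have hne' : w.reverse ≠ [] := by simpa using hne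
  refine ⟨hne', ?_, ?_, ?_⟩
  · rw [List.head_reverse]; exact hl
  · rw [List.getLast_reverse]; exact hh
  · rw [show w.reverse.Chain' G.adj ↔ _ from List.isChain_reverse]
    exact hc.imp (fun a b hab => G.adj_symm hab)

lemma badSet_reverse_subset (G : MixedGraph V) (S : Set V) (x : V) (w : List V) :
    badSet G S x w.reverse ⊆ (fun k => w.length - 3 - k) '' badSet G S x w := by
  rintro m ⟨hm, hbad⟩
  have hlen : w.reverse.length = w.length := List.length_reverse
  set n := w.length with hn
  have hmn : m + 2 < n := by omega
  set k := n - 3 - m with hk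
  refine ⟨k, ⟨by omega, ?_⟩, show n - 3 - k = m by omega⟩
  have e0 : w.reverse[m]'(by omega) = w[k+2]'(by omega) := by
    rw [List.getElem_reverse]; exact getElem_congr_idx (by omega)
  have e1 : w.reverse[m+1]'(by omega) = w[k+1]'(by omega) := by
    rw [List.getElem_reverse]; exact getElem_congr_idx (by omega)
  have e2 : w.reverse[m+2]'(by omega) = w[k]'(by omega) := by
    rw [List.getElem_reverse]; exact getElem_congr_idx (by omega)
  rw [e0, e1, e2] at hbad
  exact ⟨collider_symm hbad.1, hbad.2⟩

lemma badSet_ncard_reverse_le (G : MixedGraph V) (S : Set V) (x : V) (w : List V) :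
    (badSet G S x w.reverse).ncard ≤ (badSet G S x w).ncard := by
  calc (badSet G S x w.reverse).ncard
      ≤ ((fun k => w.length - 3 - k) '' badSet G S x w).ncard :=
        Set.ncard_le_ncard (badSet_reverse_subset G S x w)
          ((badSet_finite G S x w).image _)
    _ ≤ (badSet G S x w).ncard := Set.ncard_image_le (badSet_finite G S x w)

lemma badSet_ncard_reverse (G : MixedGraph V) (S : Set V) (x : V) (w : List V) :
    (badSet G S x w.reverse).ncard = (badSet G S x w).ncard := by
  refine le_antisymm (badSet_ncard_reverse_le G S x w) ?_
  have := badSet_ncard_reverse_le G S x w.reverse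
  rwa [List.reverse_reverse] at this

/-! ### Directed chains along a walk -/

lemma dirChain_aux {G : MixedGraph V} {S : Set V} {w : List V} (hc : w.Chain' G.adj)
    (hok : TriOk (OkP G S) w) :
    ∀ (n t : ℕ), w.length - t ≤ n → (ht : t + 1 < w.length) →
      G.dir (w[t]'(by omega)) (w[t+1]'ht) →
      (∃ x ∈ S, G.Anc (w[t]'(by omega)) x) ∨
      ∀ s, (hs : s + 1 < w.length) → t ≤ s → G.dir (w[s]'(by omega)) (w[s+1]'hs) := by
  intro n
  induction n with
  | zero => intro t hn ht _; omega
  | succ n ih =>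
    intro t hn ht hd
    by_cases h2 : t + 2 < w.length
    · by_cases hcol : G.IsCollider (w[t]'(by omega)) (w[t+1]'(by omega)) (w[t+2]'h2)
      · obtain ⟨x, hxS, hanc⟩ := (hok t h2).1 hcol
        exact Or.inl ⟨x, hxS, (anc_of_dir hd).trans hanc⟩
      · have harr : G.arrowAt (w[t]'(by omega)) (w[t+1]'(by omega)) := Or.inl hd
        have hnarr : ¬ G.arrowAt (w[t+2]'h2) (w[t+1]'(by omega)) := fun h =>
          hcol ⟨harr, h⟩
        have hd2 : G.dir (w[t+1]'(by omega)) (w[t+2]'h2) :=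
          dir_of_adj_not_arrowAt (chain'_getElem hc h2) hnarr
        rcases ih (t+1) (by omega) h2 hd2 with ⟨x, hxS, hanc⟩ | hall
        · exact Or.inl ⟨x, hxS, (anc_of_dir hd).trans hanc⟩
        · refine Or.inr fun s hs hts => ?_
          rcases Nat.eq_or_lt_of_le hts with rfl | hlt
          · exact hd
          · exact hall s hs (by omega)
    · refine Or.inr fun s hs hts => ?_
      have : s = t := by omega
      subst this
      exact hd

lemma anc_getLast {G : MixedGraph V} {w : List V} {t : ℕ} (ht : t < w.length)
    (hall : ∀ s, (hs : s + 1 < w.length) → t ≤ s → G.dir (w[s]'(by omega)) (w[s+1]'hs)) :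
    G.Anc (w[t]'ht) (w[w.length - 1]'(by omega)) := by
  have key : ∀ (n s : ℕ), (hs : s < w.length) → t ≤ s → w.length - 1 - s ≤ n →
      G.Anc (w[s]'hs) (w[w.length - 1]'(by omega)) := by
    intro n
    induction n with
    | zero =>
      intro s hs hts hn
      have : s = w.length - 1 := by omega
      subst this
      exact Relation.ReflTransGen.refl
    | succ n ih =>
      intro s hs hts hn
      by_cases hlast : s = w.length - 1
      · subst hlast; exact Relation.ReflTransGen.refl
      · have hs1 : s + 1 < w.length := by omega
        exact Relation.ReflTransGen.head (hall s hs1 hts) (ih (s+1) hs1 (by omega) (by omega))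
  exact key (w.length - 1 - t) t ht le_rfl le_rfl

lemma dirChain_anc {G : MixedGraph V} {S : Set V} {w : List V} (hc : w.Chain' G.adj)
    (hok : TriOk (OkP G S) w) {t : ℕ} (ht : t + 1 < w.length)
    (hd : G.dir (w[t]'(by omega)) (w[t+1]'ht)) :
    (∃ x ∈ S, G.Anc (w[t]'(by omega)) x) ∨
      G.Anc (w[t]'(by omega)) (w[w.length - 1]'(by omega)) := by
  rcases dirChain_aux hc hok (w.length - t) t le_rfl ht hd with h | h
  · exact Or.inl h
  · exact Or.inr (anc_getLast (by omega) h)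

/-! ### From m-connecting walks to m-connecting paths -/

lemma shortcut {G : MixedGraph V} {S : Set V} {i j : V} {w : List V}
    (hw : IsWalk G i j w) (hok : TriOk (OkP G S) w)
    {a b : ℕ} (hab : a < b) (hb : b < w.length)
    (hvab : w[a]'(by omega) = w[b]'hb) :
    ∃ u : List V, u.length < w.length ∧ IsWalk G i j u ∧ TriOk (OkP G S) u := by
  obtain ⟨hne, hh, hl, hc⟩ := hw
  have hb2 : a + 2 ≤ b := by
    by_contra hcon
    have hba : b = a + 1 := by omega
    subst hba
    have hadj := chain'_getElem hc (show a + 1 < w.length by omega)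
    rw [← hvab] at hadj
    exact adj_irrefl G _ hadj
  obtain ⟨u, hu⟩ : ∃ u : List V, u = w.take (a+1) ++ w.drop (b+1) := ⟨_, rfl⟩
  have htl : (w.take (a+1)).length = a + 1 := by rw [List.length_take]; omega
  have hulen : u.length = w.length - (b - a) := by
    rw [hu, List.length_append, List.length_take, List.length_drop]; omega
  have hu1 : ∀ t, (ht : t ≤ a) → u[t]'(by omega) = w[t]'(by omega) := by
    intro t ht
    simp only [hu]
    rw [List.getElem_append, dif_pos (by rw [htl]; omega), List.getElem_take]
  have hu2 : ∀ t, (ht : a ≤ t) → (h2 : t + (b - a) < w.length) → u[t]'(by omega) = w[t + (b - a)]'h2 := by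
    intro t ht h2
    by_cases hta : t = a
    · subst hta
      rw [hu1 t le_rfl, hvab]
      exact getElem_congr_idx (by omega)
    · simp only [hu]
      rw [List.getElem_append, dif_neg (by rw [htl]; omega), List.getElem_drop]
      exact getElem_congr_idx (by rw [htl]; omega)
  have hune : u ≠ [] := List.ne_nil_of_length_pos (by omega)
  refine ⟨u, by omega, ⟨hune, ?_, ?_, ?_⟩, ?_⟩
  · rw [List.head_eq_getElem, hu1 0 (by omega), ← List.head_eq_getElem hne]
    exact hh
  · rw [List.getLast_eq_getElem, hu2 (u.length - 1) (by omega) (by omega),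
      getElem_congr_idx (show u.length - 1 + (b - a) = w.length - 1 by omega),
      ← List.getLast_eq_getElem hne]
    exact hl
  · apply chain'_of_getElem
    intro m hm
    by_cases hma : m + 1 ≤ a
    · rw [hu1 m (by omega), hu1 (m+1) hma]
      exact chain'_getElem hc (by omega)
    · by_cases hma2 : a ≤ m
      · rw [hu2 m hma2 (by omega), hu2 (m+1) (by omega) (by omega),
          getElem_congr_idx (show m + 1 + (b - a) = m + (b - a) + 1 by omega)]
        exact chain'_getElem hc (by omega)
      · omega
  · intro t h
    by_cases hta : t + 2 ≤ a
    · rw [hu1 t (by omega), hu1 (t+1) (by omega), hu1 (t+2) hta]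
      exact hok t (by omega)
    · by_cases htb : a ≤ t
      · rw [hu2 t htb (by omega), hu2 (t+1) (by omega) (by omega), hu2 (t+2) (by omega) (by omega),
          getElem_congr_idx (show t + 1 + (b - a) = t + (b - a) + 1 by omega),
          getElem_congr_idx (show t + 2 + (b - a) = t + (b - a) + 2 by omega)]
        exact hok (t + (b - a)) (by omega)
      · -- junction: a = t + 1
        have hta' : a = t + 1 := by omega
        subst hta'
        have hb1n : b + 1 < w.length := by omega
        rw [hu1 t (by omega), hu1 (t+1) le_rfl, hu2 (t+2) (by omega) (by omega),
          getElem_congr_idx (show t + 2 + (b - (t+1)) = b + 1 by omega)]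
        have eb1 : w[b-1+1]'(by omega) = w[b]'(by omega) := getElem_congr_idx (by omega)
        have eb2 : w[b-1+2]'(by omega) = w[b+1]'hb1n := getElem_congr_idx (by omega)
        have hokb := hok (b-1) (by omega)
        rw [eb1, eb2] at hokb
        constructor
        · intro hcol
          by_cases h1 : G.IsCollider (w[t]'(by omega)) (w[t+1]'(by omega)) (w[t+1+1]'(by omega))
          · obtain ⟨x, hx, hanc⟩ := (hok t (by omega)).1
              (by rwa [getElem_congr_idx (show t+2 = t+1+1 by omega)])
            exact ⟨x, hx, hanc⟩
          · have hd1 : G.dir (w[t+1]'(by omega)) (w[t+1+1]'(by omega)) :=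
              dir_of_adj_not_arrowAt (chain'_getElem hc (by omega))
                (fun harr => h1 ⟨hcol.1, harr⟩)
            by_cases h2 : G.IsCollider (w[b-1]'(by omega)) (w[b]'(by omega)) (w[b+1]'hb1n)
            · obtain ⟨x, hx, hanc⟩ := hokb.1 h2
              rw [← hvab] at hanc
              exact ⟨x, hx, hanc⟩
            · have harrR : G.arrowAt (w[b+1]'hb1n) (w[b]'(by omega)) := by
                rw [← hvab]; exact hcol.2
              have hd2 : G.dir (w[b]'(by omega)) (w[b-1]'(by omega)) := by
                refine dir_of_adj_not_arrowAt (G.adj_symm ?_) (fun hL => h2 ⟨hL, harrR⟩)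
                have := chain'_getElem hc (show b - 1 + 1 < w.length by omega)
                rwa [eb1] at this
              rcases dirChain_aux hc hok (w.length - (t+1)) (t+1) le_rfl (by omega) hd1 with
                ⟨x, hx, hanc⟩ | hall
              · exact ⟨x, hx, hanc⟩
              · have := hall (b-1) (by omega) (by omega)
                rw [eb1] at this
                exact absurd this (fun hdd => G.not_dir_dir _ _ hdd hd2)
        · intro hncol
          by_cases hL : G.arrowAt (w[t]'(by omega)) (w[t+1]'(by omega))
          · have hnc2 : ¬ G.IsCollider (w[b-1]'(by omega)) (w[b]'(by omega)) (w[b+1]'hb1n) := by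
              intro hcl
              refine hncol ⟨hL, ?_⟩
              rw [hvab]
              exact hcl.2
            have hbS := hokb.2 hnc2
            rw [hvab]
            exact hbS
          · exact (hok t (by omega)).2 (fun hcl => hL hcl.1)

lemma walkToPath {G : MixedGraph V} {S : Set V} {i j : V} :
    ∀ (N : ℕ) (w : List V), w.length ≤ N → IsWalk G i j w → TriOk (OkP G S) w →
      ∃ p : MPath G i j, G.MConnecting S p := by
  intro N
  induction N with
  | zero =>
    intro w hN hw _
    obtain ⟨hne, -⟩ := hw
    have := List.length_pos_iff.mpr hne
    omega
  | succ N ih =>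
    intro w hN hw hok
    by_cases hnd : w.Nodup
    · obtain ⟨hne, hh, hl, hc⟩ := hw
      exact ⟨⟨w, hne, hh, hl, hnd, hc⟩, fun m h => hok m h⟩
    · have hninj : ¬ Function.Injective (fun t : Fin w.length => w[t.1]) := fun hinj =>
        hnd (List.nodup_iff_injective_getElem.mpr hinj)
      rw [Function.not_injective_iff] at hninj
      obtain ⟨t1, t2, heq, hne12⟩ := hninj
      have hvne : t1.1 ≠ t2.1 := fun hv => hne12 (Fin.ext hv)
      rcases Nat.lt_or_ge t1.1 t2.1 with hlt | hge
      · obtain ⟨u, hlen, hwu, hoku⟩ := shortcut hw hok hlt t2.2 heq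
        exact ih u (by omega) hwu hoku
      · have hlt : t2.1 < t1.1 := by omega
        obtain ⟨u, hlen, hwu, hoku⟩ := shortcut hw hok hlt t1.2 heq.symm
        exact ih u (by omega) hwu hoku

/-! ### Surgery: rerouting a bad collider through a directed path -/

lemma getElem_reverse' (w : List V) (t k : ℕ) (h2 : k < w.length)
    (he : t + k = w.length - 1) (h1 : t < w.reverse.length) : w.reverse[t]'h1 = w[k]'h2 := by
  rw [List.getElem_reverse]
  exact getElem_congr_idx (by simp only [List.length_reverse] at h1; omega)

lemma chain_anc {G : MixedGraph V} : ∀ {a : V} {l : List V}, List.Chain G.dir a l →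
    ∀ x ∈ a :: l, G.Anc a x := by
  intro a l h
  induction l generalizing a with
  | nil =>
    intro x hx
    rw [List.mem_singleton] at hx
    subst hx
    exact Relation.ReflTransGen.refl
  | cons b l ih =>
    intro x hx
    rcases List.mem_cons.mp hx with rfl | hx'
    · exact Relation.ReflTransGen.refl
    · obtain ⟨hab, hbl⟩ := List.isChain_cons_cons.mp h
      exact Relation.ReflTransGen.head hab (ih hbl x hx')

lemma ancToList {G : MixedGraph V} {a b : V} (h : G.Anc a b) :
    ∃ (d : List V) (hdne : d ≠ []), d.Chain' G.dir ∧ d.head hdne = a ∧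
      d.getLast hdne = b ∧ ∀ x ∈ d, G.Anc a x := by
  obtain ⟨l, hchain, hlast⟩ := List.exists_isChain_cons_of_relationReflTransGen h
  exact ⟨a :: l, List.cons_ne_nil a l, hchain, rfl, hlast, chain_anc hchain⟩

lemma surgery {G : MixedGraph V} {S : Set V} {i j : V} {P : V → V → V → Prop}
    (hP : ∀ a b c, ¬ G.IsCollider a b c → b ∉ S → P a b c)
    {w : List V} (hw : IsWalk G i j w) (hok : TriOk P w)
    {m : ℕ} (hm1 : 1 ≤ m) (hm2 : m + 1 < w.length)
    {d : List V} (hdne : d ≠ []) (hdc : d.Chain' G.dir)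
    (hdh : d.head hdne = w[m]'(by omega)) (hdl : d.getLast hdne = j)
    (hdS : ∀ x ∈ d, x ∉ S) :
    ∃ u : List V, IsWalk G i j u ∧ TriOk P u ∧
      ∀ x : V, badSet G S x u ⊆ badSet G S x w ∩ Set.Iio (m - 1) := by
  obtain ⟨hne, hh, hl, hc⟩ := hw
  have hdlen : 1 ≤ d.length := List.length_pos_iff.mpr hdne
  obtain ⟨u, hu⟩ : ∃ u : List V, u = w.take (m+1) ++ d.tail := ⟨_, rfl⟩
  have htl : (w.take (m+1)).length = m + 1 := by rw [List.length_take]; omega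
  have hulen : u.length = m + d.length := by
    rw [hu, List.length_append, List.length_take, List.length_tail]; omega
  have hu1 : ∀ t, (ht : t ≤ m) → u[t]'(by omega) = w[t]'(by omega) := by
    intro t ht
    simp only [hu]
    rw [List.getElem_append, dif_pos (by rw [htl]; omega), List.getElem_take]
  have hu2 : ∀ s, (hs : s < d.length) → u[m + s]'(by omega) = d[s]'hs := by
    intro s hs
    by_cases hs0 : s = 0
    · subst hs0
      simp only [Nat.add_zero]
      rw [hu1 m le_rfl, ← hdh, List.head_eq_getElem]
    · simp only [hu]
      rw [List.getElem_append, dif_neg (by rw [htl]; omega), List.getElem_tail]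
      exact getElem_congr_idx (by rw [htl]; omega)
  have hkey : ∀ t, (h : t + 2 < u.length) → m ≤ t + 1 →
      ¬ G.IsCollider (u[t]'(by omega)) (u[t+1]'(by omega)) (u[t+2]'h) ∧
        (u[t+1]'(by omega)) ∉ S := by
    intro t h hmt
    have e1 : u[t+1]'(by omega) = d[t+1-m]'(by omega) := by
      rw [getElem_congr_idx (show t + 1 = m + (t+1-m) by omega)]
      exact hu2 (t+1-m) (by omega)
    have e2 : u[t+2]'h = d[t+1-m+1]'(by omega) := by
      rw [getElem_congr_idx (show t + 2 = m + (t+1-m+1) by omega)]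
      exact hu2 (t+1-m+1) (by omega)
    have hdd : G.dir (d[t+1-m]'(by omega)) (d[t+1-m+1]'(by omega)) :=
      chain'_getElem hdc (by omega)
    rw [e1, e2]
    exact ⟨fun hcol => not_arrowAt_of_dir hdd hcol.2, hdS _ (List.getElem_mem _)⟩
  have hune : u ≠ [] := List.ne_nil_of_length_pos (by omega)
  refine ⟨u, ⟨hune, ?_, ?_, ?_⟩, ?_, ?_⟩
  · rw [List.head_eq_getElem, hu1 0 (by omega), ← List.head_eq_getElem hne]
    exact hh
  · rw [List.getLast_eq_getElem, getElem_congr_idx (show u.length - 1 = m + (d.length - 1) by omega),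
      hu2 (d.length - 1) (by omega), ← List.getLast_eq_getElem hdne]
    exact hdl
  · apply chain'_of_getElem
    intro t ht
    by_cases htm : t + 1 ≤ m
    · rw [hu1 t (by omega), hu1 (t+1) htm]
      exact chain'_getElem hc (by omega)
    · have e1 : u[t]'(by omega) = d[t-m]'(by omega) := by
        rw [getElem_congr_idx (show t = m + (t-m) by omega)]
        exact hu2 (t-m) (by omega)
      have e2 : u[t+1]'ht = d[t-m+1]'(by omega) := by
        rw [getElem_congr_idx (show t + 1 = m + (t-m+1) by omega)]
        exact hu2 (t-m+1) (by omega)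
      rw [e1, e2]
      exact Or.inl (chain'_getElem hdc (by omega))
  · intro t h
    by_cases htm : t + 2 ≤ m
    · rw [hu1 t (by omega), hu1 (t+1) (by omega), hu1 (t+2) htm]
      exact hok t (by omega)
    · obtain ⟨hnc, hnS⟩ := hkey t h (by omega)
      exact hP _ _ _ hnc hnS
  · intro x k hk
    obtain ⟨hklt, hkcol, hknanc⟩ := hk
    by_cases hkm : k + 2 ≤ m
    · have e0 := hu1 k (by omega)
      have e1 := hu1 (k+1) (by omega)
      have e2 := hu1 (k+2) hkm
      rw [e0, e1, e2] at hkcol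
      rw [e1] at hknanc
      exact ⟨⟨by omega, hkcol, hknanc⟩, by simp only [Set.mem_Iio]; omega⟩
    · exact absurd hkcol (hkey k hklt (by omega)).1

/-! ### An inducing-type walk cannot be blocked -/

lemma claimC_base {G : MixedGraph V} {S : Set V} {i j : V} (x : V) {w : List V}
    (hcard : (badSet G S x w).ncard = 0) (hw : IsWalk G i j w)
    (hok : TriOk (WOkP G S i j) w) : ∃ p : MPath G i j, G.MConnecting S p := by
  have hempty : badSet G S x w = ∅ := (Set.ncard_eq_zero (badSet_finite G S x w)).mp hcard
  refine walkToPath w.length w le_rfl hw ?_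
  intro t h
  refine ⟨fun hcol => ?_, (hok t h).2⟩
  by_cases hanc : ∃ y ∈ S, G.Anc (w[t+1]'(by omega)) y
  · exact hanc
  · exact absurd (show t ∈ badSet G S x w from ⟨h, hcol, hanc⟩) (by rw [hempty]; exact id)

lemma claimC {G : MixedGraph V} {S : Set V} {i j : V} (x : V) :
    ∀ (N : ℕ) (w : List V), (badSet G S x w).ncard ≤ N → IsWalk G i j w →
      TriOk (WOkP G S i j) w → ∃ p : MPath G i j, G.MConnecting S p := by
  have hP : ∀ a b c, ¬ G.IsCollider a b c → b ∉ S → WOkP G S i j a b c :=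
    fun a b c hnc hbS => ⟨fun hc => absurd hc hnc, fun _ => hbS⟩
  intro N
  induction N with
  | zero =>
    intro w hN hw hok
    exact claimC_base x (by omega) hw hok
  | succ N ih =>
    intro w hN hw hok
    by_cases h0 : (badSet G S x w).ncard = 0
    · exact claimC_base x h0 hw hok
    · obtain ⟨m, hmlt, hmcol, hmnanc⟩ := Set.nonempty_of_ncard_ne_zero h0
      have hSfree : ∀ y, G.Anc (w[m+1]'(by omega)) y → y ∉ S :=
        fun y hy hyS => hmnanc ⟨y, hyS, hy⟩
      rcases (hok m hmlt).1 hmcol with hanc | hanci | hancj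
      · exact absurd hanc hmnanc
      · -- directed S-free path to i: work on the reversed walk
        obtain ⟨d, hdne, hdc, hdh, hdl, hdanc⟩ := ancToList hanci
        have hw' : IsWalk G j i w.reverse := IsWalk_reverse hw
        have hok' : TriOk (WOkP G S i j) w.reverse :=
          TriOk_reverse (WOkP_symm G S i j) hok
        have hrevlen : w.reverse.length = w.length := List.length_reverse
        have hm' : 1 ≤ w.length - 2 - m := by omega
        have hm2' : (w.length - 2 - m) + 1 < w.reverse.length := by omega
        have hdh' : d.head hdne = w.reverse[w.length - 2 - m]'(by omega) := by
          rw [getElem_reverse' w _ (m+1) (by omega) (by omega)]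
          exact hdh
        obtain ⟨u', hu'w, hu'ok, hu'bad⟩ :=
          surgery hP hw' hok' hm' hm2' hdne hdc hdh' hdl
            (fun y hy => hSfree y (hdanc y hy))
        have hmbad' : (w.length - 3 - m) ∈ badSet G S x w.reverse := by
          refine ⟨by omega, ?_, ?_⟩
          · rw [getElem_reverse' w _ (m+2) (by omega) (by omega),
              getElem_reverse' w _ (m+1) (by omega) (by omega),
              getElem_reverse' w _ m (by omega) (by omega)]
            exact collider_symm hmcol
          · rw [getElem_reverse' w _ (m+1) (by omega) (by omega)]
            exact hmnanc
        have hcard' : (badSet G S x u'.reverse).ncard ≤ N := by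
          have h1 : (badSet G S x u').ncard ≤ (badSet G S x (w.reverse) \ {w.length - 3 - m}).ncard := by
            apply Set.ncard_le_ncard _ ((badSet_finite G S x w.reverse).diff)
            intro k hk
            obtain ⟨hk1, hk2⟩ := hu'bad x hk
            refine ⟨hk1, ?_⟩
            simp only [Set.mem_Iio] at hk2
            simp only [Set.mem_singleton_iff]
            omega
          have h2 := Set.ncard_diff_singleton_lt_of_mem hmbad' (badSet_finite G S x w.reverse)
          have h3 : (badSet G S x (w.reverse) \ {w.length - 3 - m}).ncard ≤
              (badSet G S x (w.reverse) \ {w.length - 3 - m}).ncard := le_rfl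
          have h4 := badSet_ncard_reverse G S x w
          have h5 := badSet_ncard_reverse G S x u'
          omega
        exact ih u'.reverse hcard' (IsWalk_reverse hu'w)
          (TriOk_reverse (WOkP_symm G S i j) hu'ok)
      · -- directed S-free path to j
        obtain ⟨d, hdne, hdc, hdh, hdl, hdanc⟩ := ancToList hancj
        obtain ⟨u, huw, huok, hubad⟩ :=
          surgery hP hw hok (show 1 ≤ m + 1 by omega) (show m + 1 + 1 < w.length by omega)
            hdne hdc hdh hdl (fun y hy => hSfree y (hdanc y hy))
        have hcard : (badSet G S x u).ncard ≤ N := by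
          have h1 : (badSet G S x u).ncard ≤ (badSet G S x w \ {m}).ncard := by
            apply Set.ncard_le_ncard _ ((badSet_finite G S x w).diff)
            intro k hk
            obtain ⟨hk1, hk2⟩ := hubad x hk
            refine ⟨hk1, ?_⟩
            simp only [Set.mem_Iio] at hk2
            simp only [Set.mem_singleton_iff]
            omega
          have h2 := Set.ncard_diff_singleton_lt_of_mem
            (show m ∈ badSet G S x w from ⟨hmlt, hmcol, hmnanc⟩) (badSet_finite G S x w)
          omega
        exact ih u hcard huw huok

/-! ### Key separation lemma -/

lemma adj_not_msep {G : MixedGraph V} {i j : V} (hadj : G.adj i j) (S : Set V) :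
    ¬ G.MSep {i} {j} S := by
  intro h
  have hne : i ≠ j := ne_of_adj G hadj
  refine h i rfl j rfl
    ⟨[i, j], by simp, rfl, by simp, by simp [hne], List.isChain_pair.mpr hadj⟩ ?_
  intro m hm
  simp only [List.length_cons, List.length_nil] at hm
  omega

lemma lemmaA {G : MixedGraph V} (hG : G.IsDMAG) {i j : V} (hne : i ≠ j)
    (hnadj : ¬ G.adj i j) :
    G.MSep {i} {j} ({x | G.Anc x i ∨ G.Anc x j} \ {i, j}) := by
  obtain ⟨S₀, hiS, hjS, hsep⟩ := hG.2 i j hne hnadj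
  rintro a rfl b rfl p hp
  obtain ⟨w, pne, phead, plast, pnodup, pchain⟩ := p
  set D : Set V := {x | G.Anc x a ∨ G.Anc x b} \ {a, b} with hD
  have hok : TriOk (OkP G D) w := fun m h => hp m h
  have hDanc : ∀ y : V, (∃ x ∈ D, G.Anc y x) → G.Anc y a ∨ G.Anc y b := by
    rintro y ⟨x, hxD, hbx⟩
    rcases hxD.1 with h1 | h1
    · exact Or.inl (hbx.trans h1)
    · exact Or.inr (hbx.trans h1)
  have h0 : w[0]'(List.length_pos_iff.mpr pne) = a := by
    rw [← List.head_eq_getElem pne]; exact phead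
  have hL : w[w.length - 1]'(by have := List.length_pos_iff.mpr pne; omega) = b := by
    rw [← List.getLast_eq_getElem pne]; exact plast
  have hinj := List.nodup_iff_injective_getElem.mp pnodup
  have hokW : TriOk (WOkP G S₀ a b) w := by
    intro m h
    constructor
    · intro hcol
      rcases hDanc _ ((hok m h).1 hcol) with h1 | h1
      · exact Or.inr (Or.inl h1)
      · exact Or.inr (Or.inr h1)
    · intro hncol
      exfalso
      apply (hok m h).2 hncol
      have hanc : G.Anc (w[m+1]'(by omega)) a ∨ G.Anc (w[m+1]'(by omega)) b := by
        by_cases hR : G.arrowAt (w[m+2]'h) (w[m+1]'(by omega))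
        · -- left edge points out of w[m+1]; walk backwards
          have hLarr : ¬ G.arrowAt (w[m]'(by omega)) (w[m+1]'(by omega)) :=
            fun hL' => hncol ⟨hL', hR⟩
          have hd : G.dir (w[m+1]'(by omega)) (w[m]'(by omega)) :=
            dir_of_adj_not_arrowAt (G.adj_symm (chain'_getElem pchain (by omega))) hLarr
          have hok' : TriOk (OkP G D) w.reverse := TriOk_reverse (OkP_symm G D) hok
          have hc' : w.reverse.Chain' G.adj := by
            rw [show w.reverse.Chain' G.adj ↔ _ from List.isChain_reverse]
            exact pchain.imp (fun x y hxy => G.adj_symm hxy)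
          have hrl : w.reverse.length = w.length := List.length_reverse
          have ht' : (w.length - 2 - m) + 1 < w.reverse.length := by omega
          have e1 : w.reverse[w.length - 2 - m]'(by omega) = w[m+1]'(by omega) :=
            getElem_reverse' w _ (m+1) (by omega) (by omega) (by omega)
          have e2 : w.reverse[(w.length - 2 - m) + 1]'ht' = w[m]'(by omega) :=
            getElem_reverse' w _ m (by omega) (by omega) ht'
          have hd' : G.dir (w.reverse[w.length - 2 - m]'(by omega))
              (w.reverse[(w.length - 2 - m) + 1]'ht') := by
            rw [e1, e2]; exact hd
          rcases dirChain_anc hc' hok' ht' hd' with hanD | hancL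
          · rw [e1] at hanD
            exact hDanc _ hanD
          · rw [e1] at hancL
            have e3 : w.reverse[w.reverse.length - 1]'(by omega) = w[0]'(by omega) :=
              getElem_reverse' w _ 0 (by omega) (by omega) (by omega)
            rw [e3, h0] at hancL
            exact Or.inl hancL
        · -- right edge points out of w[m+1]; walk forwards
          have hd : G.dir (w[m+1]'(by omega)) (w[m+1+1]'(by omega)) := by
            rw [getElem_congr_idx (show m+1+1 = m+2 by omega)]
            exact dir_of_adj_not_arrowAt (chain'_getElem pchain (by omega)) hR
          rcases dirChain_anc pchain hok (show m+1+1 < w.length by omega) hd with hanD | hancL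
          · exact hDanc _ hanD
          · rw [hL] at hancL
            exact Or.inr hancL
      have hne1 : w[m+1]'(by omega) ≠ a := by
        intro he
        have : (⟨m+1, by omega⟩ : Fin w.length) = ⟨0, by omega⟩ := by
          apply hinj
          show w[m+1]'(by omega) = w[0]'(by omega)
          rw [he, h0]
        simpa using this
      have hne2 : w[m+1]'(by omega) ≠ b := by
        intro he
        have : (⟨m+1, by omega⟩ : Fin w.length) = ⟨w.length - 1, by omega⟩ := by
          apply hinj
          show w[m+1]'(by omega) = w[w.length - 1]'(by omega)
          rw [he, hL]
        have h5 : m + 1 = w.length - 1 := by simpa using this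
        omega
      refine ⟨hanc, ?_⟩
      rintro (hmem | hmem)
      · exact hne1 hmem
      · exact hne2 hmem
  obtain ⟨q, hq⟩ := claimC a (badSet G S₀ a w).ncard w le_rfl ⟨pne, phead, plast, pchain⟩ hokW
  exact hsep a rfl b rfl q hq

/-! ### Assembly helpers -/

lemma mg_ext {G H : MixedGraph V} (h1 : G.dir = H.dir) (h2 : G.bidir = H.bidir) : G = H := by
  cases G; cases H
  cases h1; cases h2
  rfl

lemma po_congr {H K : MixedGraph V} (hH : H.Acyclic) (hK : K.Acyclic) (h : H = K) :
    po H hH = po K hK := by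
  subst h; rfl

lemma disj_single {a b : V} (h : a ≠ b) : Disjoint ({a} : Set V) {b} :=
  Set.disjoint_singleton_left.mpr h

lemma disj_single_set {a : V} {S : Set V} (h : a ∉ S) : Disjoint ({a} : Set V) S :=
  Set.disjoint_singleton_left.mpr h

end Prop2
end Proposition2
/-- Proposition 2: if `G` is Markov equivalent to the true DMAG `G*`
and `π = po(G)`, then `G_π = G`. -/
theorem gpi_eq_of_markovEquiv {V : Type*} [Fintype V] {Ω : Type*} [MeasurableSpace Ω]
    [StandardBorelSpace Ω] [Nonempty Ω] (μ : MeasureTheory.Measure Ω)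
    [MeasureTheory.IsProbabilityMeasure μ] (X : V → Ω → ℝ) (hX : ∀ i, Measurable (X i))
    (Gstar : MixedGraph V) (hGstar : Gstar.IsDMAG)
    (hfaith : RestrictedFaithful μ X hX Gstar)
    (G : MixedGraph V) (hG : G.IsDMAG) (hequiv : G.MarkovEquiv Gstar) :
    Gpi μ X hX (po G hG.1.1) = G := by
  classical
  open Prop2 in
  -- same skeleton
  have hskel : ∀ a b, G.adj a b ↔ Gstar.adj a b := by
    intro a b
    constructor
    · intro hadj
      by_contra hnadj
      have hab := ne_of_adj G hadj
      obtain ⟨S, haS, hbS, hsep⟩ := hGstar.2 a b hab hnadj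
      exact adj_not_msep hadj S
        ((hequiv {a} {b} S (disj_single hab) (disj_single_set haS) (disj_single_set hbS)).mpr hsep)
    · intro hadj
      by_contra hnadj
      have hab := ne_of_adj Gstar hadj
      obtain ⟨S, haS, hbS, hsep⟩ := hG.2 a b hab hnadj
      exact adj_not_msep hadj S
        ((hequiv {a} {b} S (disj_single hab) (disj_single_set haS) (disj_single_set hbS)).mp hsep)
  -- conditional independences for non-adjacent pairs
  have hCI : ∀ a b : V, a ≠ b → ¬ G.adj a b →
      CI μ X hX {a} {b} ({x | G.Anc x a ∨ G.Anc x b} \ {a, b}) ∧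
      CI μ X hX {b} {a} ({x | G.Anc x a ∨ G.Anc x b} \ {a, b}) := by
    intro a b hab hnadj
    have hDset : {x | G.Anc x b ∨ G.Anc x a} \ {b, a} = {x | G.Anc x a ∨ G.Anc x b} \ {a, b} := by
      ext x
      simp only [Set.mem_diff, Set.mem_setOf_eq, Set.mem_insert_iff, Set.mem_singleton_iff]
      tauto
    have h1 := lemmaA hG hab hnadj
    have h2 := lemmaA hG hab.symm (fun h => hnadj (G.adj_symm h))
    rw [hDset] at h2
    have haD : a ∉ {x | G.Anc x a ∨ G.Anc x b} \ {a, b} := fun h => h.2 (Or.inl rfl)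
    have hbD : b ∉ {x | G.Anc x a ∨ G.Anc x b} \ {a, b} := fun h => h.2 (Or.inr rfl)
    have hsep1 : Gstar.MSep {a} {b} _ :=
      (hequiv {a} {b} _ (disj_single hab) (disj_single_set haD) (disj_single_set hbD)).mp h1
    have hsep2 : Gstar.MSep {b} {a} _ :=
      (hequiv {b} {a} _ (disj_single hab.symm) (disj_single_set hbD) (disj_single_set haD)).mp h2
    exact ⟨hfaith.1 {a} {b} _ (disj_single hab) (disj_single_set haD) (disj_single_set hbD) hsep1,
      hfaith.1 {b} {a} _ (disj_single hab.symm) (disj_single_set hbD) (disj_single_set haD) hsep2⟩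
  -- AG(po(G), P) = G
  have hA1 : AGdist μ X hX (po G hG.1.1) = G := by
    apply mg_ext
    · funext a b
      apply propext
      constructor
      · rintro ⟨hle, hne', hdep⟩
        by_cases hadj : G.adj a b
        · rcases hadj with h | h | h
          · exact h
          · exact absurd (Relation.TransGen.tail' hle h) (hG.1.1 a)
          · exfalso
            rcases (show G.Anc a b from hle).cases_head with he | ⟨c, hac, hcb⟩
            · exact hne' he
            · exact hG.1.2 a b h (Relation.TransGen.head' hac hcb)
        · exfalso
          obtain ⟨hCI1, hCI2⟩ := hCI a b hne' hadj
          rcases hdep with hdep | hdep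
          · exact hdep hCI1
          · exact hdep hCI2
      · intro hdir
        refine ⟨Relation.ReflTransGen.single hdir,
          fun he => G.dir_irrefl a (he ▸ hdir), ?_⟩
        exact hfaith.2.1 a b ((hskel a b).mp (Or.inl hdir)) _
          (fun h => h.2 (Or.inl rfl)) (fun h => h.2 (Or.inr rfl))
    · funext a b
      apply propext
      constructor
      · rintro ⟨hnle1, hnle2, hdep⟩
        have hne' : a ≠ b := by
          rintro rfl
          exact hnle1 Relation.ReflTransGen.refl
        by_cases hadj : G.adj a b
        · rcases hadj with h | h | h
          · exact absurd (Relation.ReflTransGen.single h) hnle1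
          · exact absurd (Relation.ReflTransGen.single h) hnle2
          · exact h
        · exfalso
          obtain ⟨hCI1, hCI2⟩ := hCI a b hne' hadj
          rcases hdep with hdep | hdep
          · exact hdep hCI1
          · exact hdep hCI2
      · intro hbid
        have hne' : a ≠ b := fun he => G.bidir_irrefl a (he ▸ hbid)
        refine ⟨?_, ?_, ?_⟩
        · intro hle
          rcases (show G.Anc a b from hle).cases_head with he | ⟨c, hac, hcb⟩
          · exact hne' he
          · exact hG.1.2 a b hbid (Relation.TransGen.head' hac hcb)
        · intro hle
          rcases (show G.Anc b a from hle).cases_head with he | ⟨c, hac, hcb⟩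
          · exact hne' he.symm
          · exact hG.1.2 b a (G.bidir_symm a b hbid) (Relation.TransGen.head' hac hcb)
        · exact hfaith.2.1 a b ((hskel a b).mp (Or.inr (Or.inr hbid))) _
            (fun h => h.2 (Or.inl rfl)) (fun h => h.2 (Or.inr rfl))
  -- conclude
  show maximalClosure (AGdist μ X hX (po (AGdist μ X hX (po G hG.1.1))
    (AGdist_acyclic μ X hX (po G hG.1.1)))) = G
  rw [po_congr (AGdist_acyclic μ X hX (po G hG.1.1)) hG.1.1 hA1, hA1]
  apply mg_ext
  · funext a b
    apply propext
    constructor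
    · rintro (h | ⟨hnadj, hne', hins, -⟩)
      · exact h
      · exfalso
        obtain ⟨S, h1, h2, hs⟩ := hG.2 a b hne' hnadj
        exact (hins S h1 h2).1 hs
    · exact Or.inl
  · funext a b
    apply propext
    constructor
    · rintro (h | ⟨hnadj, hne', hins, -⟩)
      · exact h
      · exfalso
        obtain ⟨S, h1, h2, hs⟩ := hG.2 a b hne' hnadj
        exact (hins S h1 h2).1 hs
    · exact Or.inl
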